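/- The Zeeman fine topology on Minkowski space is strictly finer than the Euclidean topology: every Euclidean-open set is Zeeman-open, and there exists a Zeeman-open set (namely a punctured-cone ball (B_E(x;r) \ N(x)) ∪ {x}) that is not Euclidean-open. -/

import Mathlib

noncomputable section

/-- Minkowski space: `ℝ⁴` with the Euclidean topology/metric structure. -/
abbrev Mink : Type := EuclideanSpace ℝ (Fin 4)

/-- The Minkowski quadratic form `Q(v) = −v₀² + v₁² + v₂² + v₃²`. -/
def Q (v : Mink) : ℝ := -(v 0) ^ 2 + (v 1) ^ 2 + (v 2) ^ 2 + (v 3) ^ 2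

/-- A spacelike hyperplane: a 3-dimensional affine subspace all of whose nonzero
direction vectors are spacelike (`Q > 0`). -/
def IsSpacelikeHyperplane (B : Set Mink) : Prop :=
  ∃ (x : Mink) (H : Submodule ℝ Mink), Module.finrank ℝ H = 3 ∧
    (∀ w ∈ H, w ≠ 0 → 0 < Q w) ∧ B = {y | y - x ∈ H}

/-- A timelike line: an affine line with timelike direction (`Q < 0`). -/
def IsTimelikeLine (B : Set Mink) : Prop :=
  ∃ (x v : Mink), Q v < 0 ∧ B = {y | ∃ t : ℝ, y = x + t • v}

/-- A set is Zeeman-open iff its intersection with every spacelike hyperplane and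
every timelike line is open in the Euclidean subspace topology of that set. -/
def ZeemanOpen (A : Set Mink) : Prop :=
  ∀ B : Set Mink, IsSpacelikeHyperplane B ∨ IsTimelikeLine B →
    ∃ U : Set Mink, IsOpen U ∧ A ∩ B = U ∩ B

/-- The null cone at `x`. -/
def nullCone (x : Mink) : Set Mink := {y | Q (y - x) = 0}

/-- The Zeeman ball `B_Z(x;r) = (B_E(x;r) \ N(x)) ∪ {x}`. -/
def BZ (x : Mink) (r : ℝ) : Set Mink := (Metric.ball x r \ nullCone x) ∪ {x}

lemma Q_continuous : Continuous Q := by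
  unfold Q
  fun_prop

lemma nullCone_closed (x : Mink) : IsClosed (nullCone x) := by
  have : nullCone x = (fun y => Q (y - x)) ⁻¹' {0} := rfl
  rw [this]
  exact IsClosed.preimage (Q_continuous.comp (continuous_id.sub continuous_const)) isClosed_singleton

lemma Q_smul (t : ℝ) (v : Mink) : Q (t • v) = t ^ 2 * Q v := by
  simp only [Q, PiLp.smul_apply, smul_eq_mul]
  ring


/-- The Zeeman fine topology on Minkowski space is strictly finer than
the Euclidean topology: every Euclidean-open set is Zeeman-open, and some Zeeman
ball `(B_E(x;r) \ N(x)) ∪ {x}` is Zeeman-open but not Euclidean-open. -/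
theorem stmt_5 :
    (∀ A : Set Mink, IsOpen A → ZeemanOpen A) ∧
    (∃ (x : Mink) (r : ℝ), 0 < r ∧ ZeemanOpen (BZ x r) ∧ ¬ IsOpen (BZ x r)) := by
  constructor
  · intro A hA B _
    exact ⟨A, hA, rfl⟩
  · refine ⟨0, 1, one_pos, ?_, ?_⟩
    · -- Zeeman-open
      intro B hB
      by_cases h0 : (0 : Mink) ∈ B
      · -- B passes through 0; on B the cone is just {0}
        have key : ∀ y ∈ B, y ≠ 0 → Q (y - 0) ≠ 0 := by
          intro y hy hne
          rw [sub_zero]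
          rcases hB with ⟨x₀, H, _, hsp, rfl⟩ | ⟨x₀, v, hv, rfl⟩
          · have hmem : y - x₀ - (0 - x₀) ∈ H := H.sub_mem hy h0
            have : y ∈ H := by simpa using hmem
            exact ne_of_gt (hsp y this hne)
          · obtain ⟨t, ht⟩ := hy
            obtain ⟨s, hs⟩ := h0
            have hy' : y = (t - s) • v := by
              rw [sub_smul]
              have : (0 : Mink) - x₀ = s • v := by rw [hs]; abel
              calc y = x₀ + t • v := ht
                _ = t • v - ((0 : Mink) - x₀) := by abel
                _ = t • v - s • v := by rw [this]
            have hts : t - s ≠ 0 := by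
              intro h
              apply hne
              rw [hy', h, zero_smul]
            rw [hy', Q_smul]
            exact ne_of_lt (mul_neg_of_pos_of_neg (by positivity) hv)
        refine ⟨Metric.ball 0 1, Metric.isOpen_ball, ?_⟩
        ext y
        simp only [BZ, Set.mem_inter_iff, Set.mem_union, Set.mem_diff,
          Set.mem_singleton_iff, nullCone, Set.mem_setOf_eq]
        constructor
        · rintro ⟨⟨hb, _⟩ | rfl, hB'⟩
          · exact ⟨hb, hB'⟩
          · exact ⟨by simp, hB'⟩
        · rintro ⟨hb, hB'⟩
          by_cases hne : y = 0
          · exact ⟨Or.inr hne, hB'⟩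
          · exact ⟨Or.inl ⟨hb, key y hB' hne⟩, hB'⟩
      · -- 0 ∉ B : use the open set ball \ cone
        refine ⟨Metric.ball 0 1 \ nullCone 0,
          Metric.isOpen_ball.sdiff (nullCone_closed 0), ?_⟩
        ext y
        simp only [BZ, Set.mem_inter_iff, Set.mem_union, Set.mem_diff,
          Set.mem_singleton_iff]
        constructor
        · rintro ⟨h | rfl, hB'⟩
          · exact ⟨h, hB'⟩
          · exact absurd hB' h0
        · rintro ⟨h, hB'⟩
          exact ⟨Or.inl h, hB'⟩
    · -- not Euclidean-open
      intro hopen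
      rw [Metric.isOpen_iff] at hopen
      have h0 : (0 : Mink) ∈ BZ 0 1 := Or.inr rfl
      obtain ⟨ε, hε, hsub⟩ := hopen 0 h0
      set δ : ℝ := ε / 2 with hδ
      have hδpos : 0 < δ := by positivity
      set y : Mink := (WithLp.equiv 2 (Fin 4 → ℝ)).symm ![δ, δ, 0, 0] with hy
      have hyi : ∀ i, y i = ![δ, δ, 0, 0] i := fun i => rfl
      have hynorm : ‖y‖ = Real.sqrt (2 * δ ^ 2) := by
        rw [EuclideanSpace.norm_eq]
        congr 1
        rw [Fin.sum_univ_four]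
        simp [hyi]
        ring
      have hball : y ∈ Metric.ball (0 : Mink) ε := by
        rw [Metric.mem_ball, dist_zero_right, hynorm]
        have h2 : Real.sqrt (2 * δ ^ 2) < 2 * δ := by
          rw [show (2:ℝ) * δ = Real.sqrt ((2*δ)^2) by
            rw [Real.sqrt_sq (by positivity)]]
          apply Real.sqrt_lt_sqrt (by positivity)
          nlinarith
        linarith [h2, show 2 * δ = ε by rw [hδ]; ring]
      have hmem := hsub hball
      have hnull : y ∈ nullCone 0 := by
        show Q (y - 0) = 0
        rw [sub_zero]
        simp only [Q, hyi]
        norm_num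
        have h2 : (![δ, δ, 0, 0] : Fin 4 → ℝ) 2 = 0 := rfl
        have h3 : (![δ, δ, 0, 0] : Fin 4 → ℝ) 3 = 0 := rfl
        rw [h2, h3]
        norm_num
      have hyne : y ≠ 0 := by
        intro h
        have : y 0 = 0 := by rw [h]; rfl
        rw [hyi 0] at this
        simp at this
        exact absurd this (ne_of_gt hδpos)
      rcases hmem with ⟨_, hnc⟩ | h
      · exact hnc hnull
      · exact hyne h

end
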